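/- Let ν be a bounded weight on ℝ with inf ν > 0 and m(r) = ∫_{−r}^{r} ν → ∞. The decomposition of a weighted pseudo-almost automorphic function is unique: if g₁ + φ₁ = g₂ + φ₂ with g₁, g₂ almost automorphic and φ₁, φ₂ ∈ WPAA₀(ℝ,ν), then g₁ = g₂ and φ₁ = φ₂. -/

import Mathlib

open Filter MeasureTheory

def AlmostAutomorphic {n : ℕ} (f : ℝ → (Fin n → ℝ)) : Prop :=
  ∀ s : ℕ → ℝ, ∃ φ : ℕ → ℕ, StrictMono φ ∧ ∃ g : ℝ → (Fin n → ℝ),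
    (∀ t : ℝ, Tendsto (fun k => f (t + s (φ k))) atTop (nhds (g t))) ∧
    (∀ t : ℝ, Tendsto (fun k => g (t - s (φ k))) atTop (nhds (f t)))

/-- the weighted ergodic space `WPAA₀(ℝ, ν)`. -/
def WPAA0 {n : ℕ} (ν : ℝ → ℝ) (φ : ℝ → (Fin n → ℝ)) : Prop :=
  Continuous φ ∧ (∃ C : ℝ, ∀ t, ‖φ t‖ ≤ C) ∧
  Tendsto (fun r : ℝ =>
      (∫ s in (-r)..r, ‖φ s‖ * ν s) / (∫ s in (-r)..r, ν s)) atTop (nhds 0)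

/-- `ν` is a bounded weight with positive infimum whose mass tends to infinity. -/
def WeightUB (ν : ℝ → ℝ) : Prop :=
  (∀ s, 0 < ν s) ∧ LocallyIntegrable ν volume ∧
  (∃ b : ℝ, ∀ s, ν s ≤ b) ∧ (∃ a : ℝ, 0 < a ∧ ∀ s, a ≤ ν s) ∧
  Tendsto (fun r : ℝ => ∫ s in (-r)..r, ν s) atTop atTop

open Set intervalIntegral

set_option linter.unreachableTactic false
set_option linter.unusedTactic false

lemma AA_sub {n : ℕ} {f g : ℝ → Fin n → ℝ} (hf : AlmostAutomorphic f)
    (hg : AlmostAutomorphic g) : AlmostAutomorphic (fun t => f t - g t) := by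
  intro s
  obtain ⟨φa, hφa, Fa, hFa1, hFa2⟩ := hf s
  obtain ⟨φb, hφb, Fb, hFb1, hFb2⟩ := hg (s ∘ φa)
  refine ⟨φa ∘ φb, hφa.comp hφb, fun t => Fa t - Fb t, fun t => ?_, fun t => ?_⟩
  · exact (((hFa1 t).comp hφb.tendsto_atTop).sub (hFb1 t))
  · exact (((hFa2 t).comp hφb.tendsto_atTop).sub (hFb2 t))

lemma geom_aux : ∀ m : ℕ, ∑ i ∈ Finset.range m, ((i:ℝ)+1) * (2⁻¹:ℝ)^i
    = 4 - (2*(m:ℝ)+4) * (2⁻¹:ℝ)^m := by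
  intro m
  induction m with
  | zero => norm_num
  | succ k ih => rw [Finset.sum_range_succ, ih]; push_cast; ring

lemma my_geom_le (m : ℕ) : ∑ i ∈ Finset.range m, ((i:ℝ)+1) * (2⁻¹:ℝ)^i ≤ 4 := by
  rw [geom_aux]
  have : (0:ℝ) ≤ (2*(m:ℝ)+4) * 2⁻¹^m := by positivity
  linarith

lemma Continuous.const_mul' {f : ℝ → ℝ} (hf : Continuous f) {c : ℝ} :
    Continuous fun x => c * f x := continuous_const.mul hf

section Key

variable {n : ℕ}

lemma key_zero {h : ℝ → Fin n → ℝ} (hc : Continuous h) {C : ℝ}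
    (hC : ∀ t, ‖h t‖ ≤ C)
    (hmean : Tendsto (fun R : ℝ => (∫ s in (-R)..R, ‖h s‖) / R) atTop (nhds 0))
    (hAA : AlmostAutomorphic h) : ∀ t, h t = 0 := by
  set N : ℝ → ℝ := fun t => ‖h t‖ with hNdef
  have hN : Continuous N := hc.norm
  have hN0 : ∀ t, 0 ≤ N t := fun t => norm_nonneg _
  have hNi : ∀ a b : ℝ, IntervalIntegrable N volume a b := fun a b => hN.intervalIntegrable a b
  set H : ℝ → ℝ := fun x => ∫ u in (0:ℝ)..x, N u with hHdef
  have hHc : Continuous H := intervalIntegral.continuous_primitive (fun a b => hNi a b) 0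
  have hHi : ∀ a b : ℝ, IntervalIntegrable H volume a b := fun a b => hHc.intervalIntegrable a b
  have hHadd : ∀ x y : ℝ, H y - H x = ∫ u in x..y, N u := by
    intro x y
    have := integral_add_adjacent_intervals (hNi 0 x) (hNi x y)
    simp only [hHdef]
    linarith
  have hHmono : Monotone H := by
    intro x y hxy
    have h1 := hHadd x y
    have h2 : (0:ℝ) ≤ ∫ u in x..y, N u :=
      intervalIntegral.integral_nonneg hxy (fun u _ => hN0 u)
    linarith
  set T : ℝ → ℝ := fun R => H R - H (-R) with hTdef
  have hTeq : ∀ R : ℝ, T R = ∫ s in (-R)..R, N s := fun R => hHadd (-R) R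
  have hTmean : Tendsto (fun R => T R / R) atTop (nhds 0) := by
    refine hmean.congr (fun R => ?_)
    rw [hTeq]
  have hT0 : ∀ R : ℝ, 0 ≤ R → 0 ≤ T R := by
    intro R hR
    rw [hTeq]
    exact intervalIntegral.integral_nonneg (by linarith) (fun u _ => hN0 u)
  -- selection of good translates

  have hsel : ∀ m : ℕ, ∃ s : ℝ, ∀ j : ℕ, 1 ≤ j → (j:ℝ) ≤ (m:ℝ) + 1 →
      H (s + j) - H (s - j) ≤ 2^j * (2 * T (2*((m:ℝ)+1)) / ((m:ℝ)+1)) := by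
    intro m
    set nn : ℝ := (m:ℝ) + 1 with hnn
    have hm0 : (0:ℝ) ≤ (m:ℝ) := Nat.cast_nonneg m
    have hnn1 : (1:ℝ) ≤ nn := by rw [hnn]; linarith
    have hnn0 : (0:ℝ) < nn := by linarith
    have hper : ∀ c : ℝ, 0 ≤ c → c ≤ nn →
        (∫ s in (-nn)..nn, (H (s + c) - H (s - c))) ≤ 2*c*(T (2*nn)) := by
      intro c hc0 hcn
      have h1 : IntervalIntegrable (fun s => H (s + c)) volume (-nn) nn :=
        ((hHc.comp (continuous_id.add continuous_const)).intervalIntegrable _ _)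
      have h2 : IntervalIntegrable (fun s => H (s - c)) volume (-nn) nn :=
        ((hHc.comp (continuous_id.sub continuous_const)).intervalIntegrable _ _)
      rw [intervalIntegral.integral_sub h1 h2, intervalIntegral.integral_comp_add_right H c,
        intervalIntegral.integral_comp_sub_right H c]
      have e1 : ∫ x in (-nn+c)..(nn+c), H x
          = (∫ x in (-nn+c)..(nn-c), H x) + ∫ x in (nn-c)..(nn+c), H x :=
        (integral_add_adjacent_intervals (hHi _ _) (hHi _ _)).symm
      have e2 : ∫ x in (-nn-c)..(nn-c), H x
          = (∫ x in (-nn-c)..(-nn+c), H x) + ∫ x in (-nn+c)..(nn-c), H x :=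
        (integral_add_adjacent_intervals (hHi _ _) (hHi _ _)).symm
      rw [e1, e2]
      have b1 : ∫ x in (nn-c)..(nn+c), H x ≤ 2*c*(H (2*nn)) := by
        have hb : ∫ x in (nn-c)..(nn+c), H x ≤ ∫ _x in (nn-c)..(nn+c), H (2*nn) :=
          integral_mono_on (by linarith) (hHi _ _) intervalIntegrable_const
            (fun x hx => hHmono (by rcases hx with ⟨_, hx2⟩; linarith))
        rw [intervalIntegral.integral_const, smul_eq_mul] at hb
        calc ∫ x in (nn-c)..(nn+c), H x ≤ (nn + c - (nn - c)) * H (2*nn) := hb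
          _ = 2*c*(H (2*nn)) := by ring
      have b2 : 2*c*(H (-(2*nn))) ≤ ∫ x in (-nn-c)..(-nn+c), H x := by
        have hb : ∫ _x in (-nn-c)..(-nn+c), H (-(2*nn)) ≤ ∫ x in (-nn-c)..(-nn+c), H x :=
          integral_mono_on (by linarith) intervalIntegrable_const (hHi _ _)
            (fun x hx => hHmono (by rcases hx with ⟨hx1, _⟩; linarith))
        rw [intervalIntegral.integral_const, smul_eq_mul] at hb
        calc 2*c*(H (-(2*nn))) = (-nn + c - (-nn - c)) * H (-(2*nn)) := by ring
          _ ≤ ∫ x in (-nn-c)..(-nn+c), H x := hb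
      have hTexp : T (2*nn) = H (2*nn) - H (-(2*nn)) := rfl
      rw [hTexp]
      linarith
    set A : ℝ → ℝ := fun s => ∑ i ∈ Finset.range (m+1),
        (2⁻¹:ℝ)^(i+1) * (H (s + ((i:ℝ)+1)) - H (s - ((i:ℝ)+1))) with hA
    have hAc : Continuous A := by
      apply continuous_finset_sum
      intro i _
      exact ((hHc.comp (continuous_id.add continuous_const)).sub
        (hHc.comp (continuous_id.sub continuous_const))).const_mul'
    have hAint : ∫ s in (-nn)..nn, A s ≤ 4 * T (2*nn) := by
      have hint : ∀ i ∈ Finset.range (m+1), IntervalIntegrable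
          (fun s => (2⁻¹:ℝ)^(i+1) * (H (s + ((i:ℝ)+1)) - H (s - ((i:ℝ)+1)))) volume (-nn) nn :=
        fun i _ => (((hHc.comp (continuous_id.add continuous_const)).sub
          (hHc.comp (continuous_id.sub continuous_const))).const_mul').intervalIntegrable _ _
      have hsum : ∫ s in (-nn)..nn, A s = ∑ i ∈ Finset.range (m+1),
          ∫ s in (-nn)..nn, (2⁻¹:ℝ)^(i+1) * (H (s + ((i:ℝ)+1)) - H (s - ((i:ℝ)+1))) := by
        rw [hA]
        exact intervalIntegral.integral_finset_sum hint
      rw [hsum]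
      have hstep : ∀ i ∈ Finset.range (m+1),
          (∫ s in (-nn)..nn, (2⁻¹:ℝ)^(i+1) * (H (s + ((i:ℝ)+1)) - H (s - ((i:ℝ)+1))))
          ≤ ((i:ℝ)+1) * (2⁻¹:ℝ)^i * T (2*nn) := by
        intro i hi
        rw [intervalIntegral.integral_const_mul]
        have him : (i:ℝ) ≤ (m:ℝ) := by
          exact_mod_cast Nat.lt_succ_iff.mp (Finset.mem_range.mp hi)
        have hle := hper ((i:ℝ)+1) (by positivity) (by rw [hnn]; linarith)
        calc (2⁻¹:ℝ)^(i+1) * ∫ s in (-nn)..nn, (H (s + ((i:ℝ)+1)) - H (s - ((i:ℝ)+1)))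
            ≤ (2⁻¹:ℝ)^(i+1) * (2*((i:ℝ)+1)*(T (2*nn))) :=
              mul_le_mul_of_nonneg_left hle (by positivity)
          _ = ((i:ℝ)+1) * (2⁻¹:ℝ)^i * T (2*nn) := by ring
      calc (∑ i ∈ Finset.range (m+1),
            ∫ s in (-nn)..nn, (2⁻¹:ℝ)^(i+1) * (H (s + ((i:ℝ)+1)) - H (s - ((i:ℝ)+1))))
          ≤ ∑ i ∈ Finset.range (m+1), ((i:ℝ)+1) * (2⁻¹:ℝ)^i * T (2*nn) :=
            Finset.sum_le_sum hstep
        _ = (∑ i ∈ Finset.range (m+1), ((i:ℝ)+1) * (2⁻¹:ℝ)^i) * T (2*nn) :=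
            (Finset.sum_mul _ _ _).symm
        _ ≤ 4 * T (2*nn) :=
            mul_le_mul_of_nonneg_right (my_geom_le _) (hT0 _ (by linarith))
    obtain ⟨s0, hs0mem, hs0min⟩ := (isCompact_Icc (a := -nn) (b := nn)).exists_isMinOn
      (Set.nonempty_Icc.mpr (by linarith)) hAc.continuousOn
    have hmin : A s0 ≤ 2 * T (2*nn) / nn := by
      have h2 : ∫ _s in (-nn)..nn, A s0 ≤ ∫ s in (-nn)..nn, A s :=
        integral_mono_on (by linarith) intervalIntegrable_const (hAc.intervalIntegrable _ _)
          (fun x hx => hs0min hx)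
      rw [intervalIntegral.integral_const, smul_eq_mul] at h2
      rw [le_div_iff₀ hnn0]
      nlinarith [h2, hAint]
    refine ⟨s0, ?_⟩
    intro j hj hjm
    obtain ⟨i, rfl⟩ : ∃ i, j = i + 1 := ⟨j - 1, (Nat.succ_pred_eq_of_pos hj).symm⟩
    have him : i ∈ Finset.range (m+1) := by
      rw [Finset.mem_range, Nat.lt_succ_iff]
      have : ((i:ℝ)+1) ≤ (m:ℝ)+1 := by push_cast at hjm; linarith
      exact_mod_cast (by linarith : (i:ℝ) ≤ (m:ℝ))
    have hterm : (2⁻¹:ℝ)^(i+1) * (H (s0 + ((i:ℝ)+1)) - H (s0 - ((i:ℝ)+1))) ≤ A s0 := by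
      have hbeta : A s0 = ∑ k ∈ Finset.range (m+1),
          (2⁻¹:ℝ)^(k+1) * (H (s0 + ((k:ℝ)+1)) - H (s0 - ((k:ℝ)+1))) := by rw [hA]
      rw [hbeta]
      have hnonneg : ∀ k ∈ Finset.range (m+1),
          (0:ℝ) ≤ (2⁻¹:ℝ)^(k+1) * (H (s0 + ((k:ℝ)+1)) - H (s0 - ((k:ℝ)+1))) := by
        intro k _
        have hw : (0:ℝ) ≤ H (s0 + ((k:ℝ)+1)) - H (s0 - ((k:ℝ)+1)) := by
          have := hHmono (show s0 - ((k:ℝ)+1) ≤ s0 + ((k:ℝ)+1) by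
            have : (0:ℝ) ≤ (k:ℝ) := Nat.cast_nonneg k
            linarith)
          linarith
        positivity
      exact Finset.single_le_sum hnonneg him
    have hW2 : H (s0 + ((i:ℝ)+1)) - H (s0 - ((i:ℝ)+1)) ≤ 2^(i+1) * A s0 := by
      have hkey : (2:ℝ)^(i+1) * ((2⁻¹:ℝ)^(i+1)
          * (H (s0 + ((i:ℝ)+1)) - H (s0 - ((i:ℝ)+1))))
          = H (s0 + ((i:ℝ)+1)) - H (s0 - ((i:ℝ)+1)) := by
        rw [← mul_assoc, ← mul_pow]
        norm_num
      calc H (s0 + ((i:ℝ)+1)) - H (s0 - ((i:ℝ)+1))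
          = (2:ℝ)^(i+1) * ((2⁻¹:ℝ)^(i+1) * (H (s0 + ((i:ℝ)+1)) - H (s0 - ((i:ℝ)+1)))) :=
            hkey.symm
        _ ≤ (2:ℝ)^(i+1) * A s0 := mul_le_mul_of_nonneg_left hterm (by positivity)
    have hfin : H (s0 + ((i:ℝ)+1)) - H (s0 - ((i:ℝ)+1)) ≤ 2^(i+1) * (2 * T (2*nn) / nn) :=
      le_trans hW2 (mul_le_mul_of_nonneg_left hmin (by positivity))
    push_cast
    rw [hnn] at hfin
    convert hfin using 3 <;> push_cast <;> ring

  choose σ hσ using hsel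
  set ε : ℕ → ℝ := fun m => 2 * T (2*((m:ℝ)+1)) / ((m:ℝ)+1) with hεdef
  have hε : Tendsto ε atTop (nhds 0) := by
    have h1 : Tendsto (fun m : ℕ => 2*((m:ℝ)+1)) atTop atTop := by
      apply Tendsto.const_mul_atTop two_pos
      exact tendsto_atTop_add_const_right _ 1 tendsto_natCast_atTop_atTop
    have h3 : Tendsto (fun m : ℕ => T (2*((m:ℝ)+1)) / (2*((m:ℝ)+1))) atTop (nhds 0) :=
      hTmean.comp h1
    have h4 := h3.const_mul (4:ℝ)
    rw [mul_zero] at h4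
    refine h4.congr (fun m => ?_)
    have hm1 : ((m:ℝ)+1) ≠ 0 := by positivity
    rw [hεdef]
    field_simp
    ring
  obtain ⟨φ, hφ, G, hG1, hG2⟩ := hAA σ
  have hGC : ∀ t, ‖G t‖ ≤ C := fun t =>
    le_of_tendsto (hG1 t).norm (Eventually.of_forall (fun k => hC _))
  have hGm : StronglyMeasurable G := by
    apply stronglyMeasurable_of_tendsto (u := atTop) (f := fun k t => h (t + σ (φ k)))
    · intro k
      exact (hc.comp (continuous_id.add continuous_const)).stronglyMeasurable
    · rw [tendsto_pi_nhds]
      exact hG1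
  have hzero : ∀ j : ℕ, 1 ≤ j → ∀ᵐ t : ℝ, t ∈ Ioc (-(j:ℝ)) (j:ℝ) → G t = 0 := by
    intro j hj
    have h0j : (0:ℝ) ≤ (j:ℝ) := Nat.cast_nonneg j
    have hjj : -(j:ℝ) ≤ (j:ℝ) := by linarith
    have hGint : IntervalIntegrable (fun t => ‖G t‖) volume (-(j:ℝ)) (j:ℝ) := by
      rw [intervalIntegrable_iff_integrableOn_Ioc_of_le hjj]
      apply Measure.integrableOn_of_bounded (M := C) measure_Ioc_lt_top.ne
        hGm.norm.aestronglyMeasurable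
      exact ae_of_all _ (fun t => by
        rw [Real.norm_eq_abs, abs_of_nonneg (norm_nonneg _)]; exact hGC t)
    have hlim : Tendsto (fun k => ∫ t in (-(j:ℝ))..(j:ℝ), ‖h (t + σ (φ k))‖) atTop
        (nhds (∫ t in (-(j:ℝ))..(j:ℝ), ‖G t‖)) := by
      apply intervalIntegral.tendsto_integral_filter_of_dominated_convergence
        (bound := fun _ => C)
      · exact Eventually.of_forall (fun k =>
          (hc.norm.comp (continuous_id.add continuous_const)).aestronglyMeasurable)
      · exact Eventually.of_forall (fun k => ae_of_all _ (fun t _ => by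
          rw [Real.norm_eq_abs, abs_of_nonneg (norm_nonneg _)]; exact hC _))
      · exact intervalIntegrable_const
      · exact ae_of_all _ (fun t _ => (hG1 t).norm)
    have hval : ∀ k : ℕ, (∫ t in (-(j:ℝ))..(j:ℝ), ‖h (t + σ (φ k))‖)
        = H (σ (φ k) + j) - H (σ (φ k) - j) := by
      intro k
      have h1 : (∫ t in (-(j:ℝ))..(j:ℝ), N (t + σ (φ k)))
          = ∫ x in (-(j:ℝ) + σ (φ k))..((j:ℝ) + σ (φ k)), N x :=
        intervalIntegral.integral_comp_add_right N (σ (φ k))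
      have e1 : -(j:ℝ) + σ (φ k) = σ (φ k) - j := by ring
      have e2 : (j:ℝ) + σ (φ k) = σ (φ k) + j := by ring
      rw [e1, e2] at h1
      rw [show (fun t => ‖h (t + σ (φ k))‖) = (fun t => N (t + σ (φ k))) from rfl]
      rw [h1, hHadd]
    have hbnd : ∀ᶠ k in atTop, (∫ t in (-(j:ℝ))..(j:ℝ), ‖h (t + σ (φ k))‖)
        ≤ 2^j * ε (φ k) := by
      filter_upwards [eventually_ge_atTop j] with k hk
      rw [hval k]
      apply hσ (φ k) j hj
      have hjk : (j:ℕ) ≤ φ k := le_trans hk hφ.le_apply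
      have : (j:ℝ) ≤ (φ k : ℝ) := by exact_mod_cast hjk
      linarith
    have hεφ : Tendsto (fun k => (2:ℝ)^j * ε (φ k)) atTop (nhds 0) := by
      have h5 := (hε.comp hφ.tendsto_atTop).const_mul ((2:ℝ)^j)
      rw [mul_zero] at h5
      exact h5
    have hle : (∫ t in (-(j:ℝ))..(j:ℝ), ‖G t‖) ≤ 0 :=
      le_of_tendsto_of_tendsto hlim hεφ hbnd
    have hge : 0 ≤ ∫ t in (-(j:ℝ))..(j:ℝ), ‖G t‖ :=
      intervalIntegral.integral_nonneg hjj (fun t _ => norm_nonneg _)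
    have heq0 : ∫ t in (-(j:ℝ))..(j:ℝ), ‖G t‖ = 0 := le_antisymm hle hge
    rw [integral_eq_zero_iff_of_le_of_nonneg_ae hjj
      (ae_of_all _ (fun t => norm_nonneg (G t))) hGint] at heq0
    have hres := (ae_restrict_iff' measurableSet_Ioc).mp heq0
    filter_upwards [hres] with t ht hmem
    exact norm_eq_zero.mp (ht hmem)
  have hcov : ∀ t : ℝ, ∃ j : ℕ, 1 ≤ j ∧ t ∈ Ioc (-(j:ℝ)) (j:ℝ) := by
    intro t
    obtain ⟨j, hjt⟩ := exists_nat_gt |t|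
    refine ⟨j + 1, Nat.le_add_left 1 j, ?_⟩
    have h1 : |t| < (j:ℝ) + 1 := by linarith
    have h2 : -|t| ≤ t := neg_abs_le t
    have h3 : t ≤ |t| := le_abs_self t
    constructor
    · push_cast
      linarith
    · push_cast
      linarith
  have hGae : ∀ᵐ t : ℝ, G t = 0 := by
    have hall := ae_all_iff.mpr (fun j : ℕ => hzero (j+1) (Nat.le_add_left 1 j))
    filter_upwards [hall] with t ht
    obtain ⟨j, hj1, hjm⟩ := hcov t
    obtain ⟨i, rfl⟩ : ∃ i, j = i + 1 := ⟨j - 1, (Nat.succ_pred_eq_of_pos hj1).symm⟩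
    exact ht i hjm
  have hSk : ∀ k : ℕ, ∀ᵐ t : ℝ, G (t - σ (φ k)) = 0 := by
    intro k
    have hS : volume {t : ℝ | ¬ G t = 0} = 0 := hGae
    rw [ae_iff]
    have hpre : {t : ℝ | ¬ G (t - σ (φ k)) = 0}
        = (fun t => t + (-σ (φ k))) ⁻¹' {t : ℝ | ¬ G t = 0} := by
      ext t
      simp [sub_eq_add_neg]
    rw [hpre, measure_preimage_add_right]
    exact hS
  have hhae : h =ᵐ[(volume : Measure ℝ)] (fun _ => (0 : Fin n → ℝ)) := by
    filter_upwards [ae_all_iff.mpr hSk] with t ht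
    have h0 : Tendsto (fun k => G (t - σ (φ k))) atTop (nhds (0 : Fin n → ℝ)) :=
      tendsto_const_nhds.congr (fun k => (ht k).symm)
    exact tendsto_nhds_unique (hG2 t) h0
  have hfin : h = fun _ => (0 : Fin n → ℝ) :=
    (hc.ae_eq_iff_eq volume continuous_const).mp hhae
  intro t
  rw [hfin]

end Key

theorem stmt_9 {n : ℕ} (ν : ℝ → ℝ) (hν : WeightUB ν)
    (g₁ g₂ φ₁ φ₂ : ℝ → (Fin n → ℝ))
    (hg₁ : AlmostAutomorphic g₁) (hg₂ : AlmostAutomorphic g₂)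
    (hφ₁ : WPAA0 ν φ₁) (hφ₂ : WPAA0 ν φ₂)
    (heq : ∀ t, g₁ t + φ₁ t = g₂ t + φ₂ t) :
    g₁ = g₂ ∧ φ₁ = φ₂ := by
  obtain ⟨hνpos, hνloc, ⟨b, hb⟩, ⟨a, ha0, ha⟩, -⟩ := hν
  obtain ⟨hφ₁c, ⟨C₁, hC₁⟩, hφ₁m⟩ := hφ₁
  obtain ⟨hφ₂c, ⟨C₂, hC₂⟩, hφ₂m⟩ := hφ₂
  have hb0 : (0:ℝ) < b := lt_of_lt_of_le (hνpos 0) (hb 0)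
  set h : ℝ → Fin n → ℝ := fun t => φ₂ t - φ₁ t with hh
  have hfun : ∀ t, g₁ t - g₂ t = h t := by
    intro t
    rw [hh, sub_eq_sub_iff_add_eq_add, heq t, add_comm]
  have hA : AlmostAutomorphic h := by
    have h1 := AA_sub hg₁ hg₂
    have he : (fun t => g₁ t - g₂ t) = h := funext hfun
    rwa [he] at h1
  have hcont : Continuous h := hφ₂c.sub hφ₁c
  have hCb : ∀ t, ‖h t‖ ≤ C₂ + C₁ := fun t =>
    le_trans (norm_sub_le _ _) (add_le_add (hC₂ t) (hC₁ t))
  have hνint : ∀ p q : ℝ, IntervalIntegrable ν volume p q := by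
    intro p q
    rw [intervalIntegrable_iff]
    exact (hνloc.integrableOn_isCompact isCompact_uIcc).mono_set Set.uIoc_subset_uIcc
  have hmulint : ∀ (ψ : ℝ → Fin n → ℝ), Continuous ψ → ∀ Cb : ℝ, (∀ t, ‖ψ t‖ ≤ Cb) →
      ∀ p q : ℝ, IntervalIntegrable (fun s => ‖ψ s‖ * ν s) volume p q := by
    intro ψ hψ Cb hCbb p q
    rw [intervalIntegrable_iff]
    apply Integrable.bdd_mul (c := Cb) (intervalIntegrable_iff.mp (hνint p q))
      hψ.norm.aestronglyMeasurable
    exact ae_of_all _ (fun x => by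
      rw [Real.norm_eq_abs, abs_of_nonneg (norm_nonneg _)]; exact hCbb x)
  have key : Tendsto (fun R : ℝ => (∫ s in (-R)..R, ‖h s‖) / R) atTop (nhds 0) := by
    set Num : ℝ → ℝ := fun R => ∫ s in (-R)..R, ‖h s‖ * ν s with hNum
    set D : ℝ → ℝ := fun R => ∫ s in (-R)..R, ν s with hD
    have hDlb : ∀ R : ℝ, 0 ≤ R → 2*R*a ≤ D R := by
      intro R hR
      have h1 : ∫ _s in (-R)..R, a ≤ D R :=
        intervalIntegral.integral_mono_on (by linarith) intervalIntegrable_const (hνint _ _)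
          (fun x _ => ha x)
      rw [intervalIntegral.integral_const, smul_eq_mul] at h1
      calc 2*R*a = (R - -R) * a := by ring
        _ ≤ D R := h1
    have hDub : ∀ R : ℝ, 0 ≤ R → D R ≤ 2*R*b := by
      intro R hR
      have h1 : D R ≤ ∫ _s in (-R)..R, b :=
        intervalIntegral.integral_mono_on (by linarith) (hνint _ _) intervalIntegrable_const
          (fun x _ => hb x)
      rw [intervalIntegral.integral_const, smul_eq_mul] at h1
      calc D R ≤ (R - -R) * b := h1
        _ = 2*R*b := by ring
    have hDpos : ∀ R : ℝ, 0 < R → 0 < D R := fun R hR =>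
      lt_of_lt_of_le (by positivity) (hDlb R hR.le)
    set W : ℝ → ℝ := fun R => Num R / D R with hW
    have hWnn : ∀ R : ℝ, 0 < R → 0 ≤ W R := by
      intro R hR
      apply div_nonneg _ (hDpos R hR).le
      exact intervalIntegral.integral_nonneg (by linarith)
        (fun x _ => mul_nonneg (norm_nonneg _) (hνpos x).le)
    have hWle : ∀ R : ℝ, 0 < R → W R ≤
        (∫ s in (-R)..R, ‖φ₁ s‖ * ν s) / D R + (∫ s in (-R)..R, ‖φ₂ s‖ * ν s) / D R := by
      intro R hR
      rw [hW, ← add_div]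
      have hnum : Num R ≤
          (∫ s in (-R)..R, ‖φ₁ s‖ * ν s) + ∫ s in (-R)..R, ‖φ₂ s‖ * ν s := by
        rw [← intervalIntegral.integral_add (hmulint φ₁ hφ₁c C₁ hC₁ _ _)
          (hmulint φ₂ hφ₂c C₂ hC₂ _ _)]
        apply intervalIntegral.integral_mono_on (by linarith)
          (hmulint h hcont (C₂ + C₁) hCb _ _)
          ((hmulint φ₁ hφ₁c C₁ hC₁ _ _).add (hmulint φ₂ hφ₂c C₂ hC₂ _ _))
        intro x _
        have h2 : ‖h x‖ ≤ ‖φ₁ x‖ + ‖φ₂ x‖ := by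
          rw [hh]
          calc ‖φ₂ x - φ₁ x‖ ≤ ‖φ₂ x‖ + ‖φ₁ x‖ := norm_sub_le _ _
            _ = ‖φ₁ x‖ + ‖φ₂ x‖ := add_comm _ _
        calc ‖h x‖ * ν x ≤ (‖φ₁ x‖ + ‖φ₂ x‖) * ν x :=
              mul_le_mul_of_nonneg_right h2 (hνpos x).le
          _ = ‖φ₁ x‖ * ν x + ‖φ₂ x‖ * ν x := by ring
      exact (div_le_div_iff_of_pos_right (hDpos R hR)).mpr hnum
    have hWt : Tendsto W atTop (nhds 0) := by
      apply squeeze_zero' (Eventually.mono (eventually_gt_atTop 0) hWnn)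
        (Eventually.mono (eventually_gt_atTop 0) hWle)
      simpa using hφ₁m.add hφ₂m
    have hfinal : Tendsto (fun R : ℝ => (2*b/a) * W R) atTop (nhds 0) := by
      have h5 := hWt.const_mul (2*b/a)
      rwa [mul_zero] at h5
    apply squeeze_zero' (f := fun R : ℝ => (∫ s in (-R)..R, ‖h s‖) / R)
      (g := fun R : ℝ => (2*b/a) * W R) ?_ ?_ hfinal
    · filter_upwards [eventually_gt_atTop 0] with R hR
      apply div_nonneg _ hR.le
      exact intervalIntegral.integral_nonneg (by linarith) (fun x _ => norm_nonneg _)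
    · filter_upwards [eventually_gt_atTop 0] with R hR
      have hint : IntervalIntegrable (fun s => ‖h s‖) volume (-R) R :=
        hcont.norm.intervalIntegrable _ _
      have hTa : a * (∫ s in (-R)..R, ‖h s‖) ≤ Num R := by
        rw [← intervalIntegral.integral_const_mul]
        apply intervalIntegral.integral_mono_on (by linarith)
          (hint.const_mul a) (hmulint h hcont (C₂ + C₁) hCb _ _)
        intro x _
        calc a * ‖h x‖ = ‖h x‖ * a := mul_comm _ _
          _ ≤ ‖h x‖ * ν x := mul_le_mul_of_nonneg_left (ha x) (norm_nonneg _)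
      have h6 : Num R ≤ W R * (2*R*b) := by
        have h7 : Num R = W R * D R := (div_mul_cancel₀ _ (hDpos R hR).ne').symm
        rw [h7]
        exact mul_le_mul_of_nonneg_left (hDub R hR.le) (hWnn R hR)
      have h8 : (∫ s in (-R)..R, ‖h s‖) ≤ W R * (2*R*b) / a := by
        rw [le_div_iff₀ ha0]
        calc (∫ s in (-R)..R, ‖h s‖) * a = a * (∫ s in (-R)..R, ‖h s‖) := mul_comm _ _
          _ ≤ Num R := hTa
          _ ≤ W R * (2*R*b) := h6
      calc (∫ s in (-R)..R, ‖h s‖) / R ≤ (W R * (2*R*b) / a) / R :=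
            div_le_div_of_nonneg_right h8 hR.le
        _ = (2*b/a) * W R := by field_simp
  have hz := key_zero hcont hCb key hA
  constructor
  · funext t
    have h1 := hfun t
    rw [hz t] at h1
    exact sub_eq_zero.mp h1
  · funext t
    have h1 := hz t
    rw [hh] at h1
    exact (sub_eq_zero.mp h1).symm
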